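/- Let C be a symmetric matrix with 0 ⪯ C ⪯ I and let ρ₁, ρ₂ ∈ ℝ. Then exp(C·ρ₁ + (I - C)·ρ₂) ⪯ C·exp(ρ₁) + (I - C)·exp(ρ₂), where exp on the left is the matrix exponential and exp(ρᵢ) are scalars. -/

import Mathlib

theorem matrix_exp_convexity_bound {n : ℕ} (C : Matrix (Fin n) (Fin n) ℝ)
    (hC : C.PosSemidef) (hC1 : ((1 : Matrix (Fin n) (Fin n) ℝ) - C).PosSemidef)
    (ρ₁ ρ₂ : ℝ) :
    (Real.exp ρ₁ • C + Real.exp ρ₂ • ((1 : Matrix (Fin n) (Fin n) ℝ) - C)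
      - NormedSpace.exp (ρ₁ • C + ρ₂ • ((1 : Matrix (Fin n) (Fin n) ℝ) - C))).PosSemidef := by
  classical
  have hH : C.IsHermitian := hC.1
  set U : Matrix (Fin n) (Fin n) ℝ := (hH.eigenvectorUnitary : Matrix (Fin n) (Fin n) ℝ) with hUdef
  have hsU : star U * U = 1 := Matrix.mem_unitaryGroup_iff'.mp hH.eigenvectorUnitary.2
  have hUs : U * star U = 1 := Matrix.mem_unitaryGroup_iff.mp hH.eigenvectorUnitary.2
  have hinv : U⁻¹ = star U := Matrix.inv_eq_left_inv hsU
  set l := hH.eigenvalues with hl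
  have hCspec : C = U * Matrix.diagonal l * star U := by
    have := hH.spectral_theorem
    simpa using this
  have hdiagC : star U * C * U = Matrix.diagonal l := by
    have := hH.conjStarAlgAut_star_eigenvectorUnitary
    simpa using this
  have hl0 : ∀ i, 0 ≤ l i := fun i => hC.eigenvalues_nonneg i
  have hl1 : ∀ i, l i ≤ 1 := by
    intro i
    have hpsd : (star U * (1 - C) * U).PosSemidef := hC1.conjTranspose_mul_mul_same U
    have hdiag1 : star U * (1 - C) * U = Matrix.diagonal (fun i => 1 - l i) := by
      rw [Matrix.mul_sub, Matrix.sub_mul, Matrix.mul_one, hsU, hdiagC]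
      ext j k
      by_cases h : j = k <;> simp [Matrix.diagonal, h, Matrix.one_apply]
    rw [hdiag1] at hpsd
    have := Matrix.posSemidef_diagonal_iff.mp hpsd i
    linarith
  have hC1spec : (1 : Matrix (Fin n) (Fin n) ℝ) - C
      = U * Matrix.diagonal (fun i => 1 - l i) * star U := by
    have hd : Matrix.diagonal (fun i => 1 - l i)
        = 1 - Matrix.diagonal l := by
      rw [← Matrix.diagonal_one, ← Matrix.diagonal_sub]
    rw [hd, Matrix.mul_sub, Matrix.sub_mul, Matrix.mul_one, hUs, ← hCspec]
  have key : ∀ (a b : ℝ), a • C + b • ((1 : Matrix (Fin n) (Fin n) ℝ) - C)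
      = U * Matrix.diagonal (fun i => a * l i + b * (1 - l i)) * star U := by
    intro a b
    have hd : Matrix.diagonal (fun i => a * l i + b * (1 - l i))
        = a • Matrix.diagonal l + b • Matrix.diagonal (fun i => 1 - l i) := by
      rw [← Matrix.diagonal_smul, ← Matrix.diagonal_smul, ← Matrix.diagonal_add]
      congr 1
    rw [hC1spec, hCspec, hd]
    simp only [Matrix.mul_add, Matrix.add_mul, Matrix.mul_smul, Matrix.smul_mul]
  have hUunit : IsUnit U := ⟨⟨U, star U, hUs, hsU⟩, rfl⟩
  have hexp : NormedSpace.exp (ρ₁ • C + ρ₂ • ((1 : Matrix (Fin n) (Fin n) ℝ) - C))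
      = U * Matrix.diagonal (fun i => Real.exp (ρ₁ * l i + ρ₂ * (1 - l i))) * star U := by
    rw [key ρ₁ ρ₂, ← hinv, Matrix.exp_conj U _ hUunit, Matrix.exp_diagonal, hinv]
    congr 2
    funext i
    simp [Real.exp_eq_exp_ℝ, Pi.exp_def]
  have hgoal : Real.exp ρ₁ • C + Real.exp ρ₂ • ((1 : Matrix (Fin n) (Fin n) ℝ) - C)
      - NormedSpace.exp (ρ₁ • C + ρ₂ • ((1 : Matrix (Fin n) (Fin n) ℝ) - C))
      = U * Matrix.diagonal (fun i =>
          (Real.exp ρ₁ * l i + Real.exp ρ₂ * (1 - l i))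
            - Real.exp (ρ₁ * l i + ρ₂ * (1 - l i))) * star U := by
    rw [key (Real.exp ρ₁) (Real.exp ρ₂), hexp, ← Matrix.sub_mul, ← Matrix.mul_sub,
      ← Matrix.diagonal_sub]
  rw [hgoal]
  have hg : ∀ i, 0 ≤ (Real.exp ρ₁ * l i + Real.exp ρ₂ * (1 - l i))
      - Real.exp (ρ₁ * l i + ρ₂ * (1 - l i)) := by
    intro i
    have h := convexOn_exp.2 (Set.mem_univ ρ₁) (Set.mem_univ ρ₂) (hl0 i)
      (by linarith [hl1 i]) (by ring : l i + (1 - l i) = 1)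
    simp only [smul_eq_mul] at h
    have e : ρ₁ * l i + ρ₂ * (1 - l i) = l i * ρ₁ + (1 - l i) * ρ₂ := by ring
    rw [sub_nonneg, e]
    exact le_of_le_of_eq h (by ring)
  exact (Matrix.posSemidef_diagonal_iff.mpr hg).mul_mul_conjTranspose_same U
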